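/- With respect to the q-Dunkl-Fischer inner product ⟨P, Q⟩ = (conj(P)(D₁^q,…,Dₙ^q) Q)(0) on complex polynomials in n variables (q positive real, q ≠ 1, parameters μ_i > 0), the adjoint of multiplication by x_i is the q-Dunkl operator D_i^q: ⟨x_i P, Q⟩ = ⟨P, D_i^q Q⟩ for all polynomials P, Q. -/

import Mathlib

open MvPolynomial

/-- The operator rescaling the `i`-th variable by `c` (q-shift `T_{q,i}` for `c = q`,
reflection `r_i` for `c = -1`). -/
noncomputable def varScale (n : ℕ) (c : ℂ) (i : Fin n) :
    MvPolynomial (Fin n) ℂ →ₐ[ℂ] MvPolynomial (Fin n) ℂ :=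
  aeval (fun j => if j = i then c • X j else X j)

/-- Formal division by the variable `x_i`. -/
noncomputable def divXi (n : ℕ) (i : Fin n) (f : MvPolynomial (Fin n) ℂ) :
    MvPolynomial (Fin n) ℂ :=
  ∑ α ∈ f.support, monomial (α - Finsupp.single i 1) (coeff α f)

/-- The `ℤ₂ⁿ` q-Dunkl operator
`D_i^q = (q^{μ_i}/(q−q⁻¹)) (T_{q,i} − r_i)/x_i − (q^{−μ_i}/(q−q⁻¹)) (T_{q,i}⁻¹ − r_i)/x_i`. -/
noncomputable def qDunkl (n : ℕ) (q : ℂ) (μ : Fin n → ℝ) (i : Fin n)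
    (f : MvPolynomial (Fin n) ℂ) : MvPolynomial (Fin n) ℂ :=
  (q ^ ((μ i : ℝ) : ℂ) / (q - q⁻¹)) • divXi n i (varScale n q i f - varScale n (-1) i f)
    - (q ^ ((-(μ i) : ℝ) : ℂ) / (q - q⁻¹)) • divXi n i (varScale n q⁻¹ i f - varScale n (-1) i f)

/-- `conj(P)(D₁^q,…,Dₙ^q)` applied to `Q`. -/
noncomputable def qFischerApply (n : ℕ) (q : ℂ) (μ : Fin n → ℝ)
    (P Q : MvPolynomial (Fin n) ℂ) : MvPolynomial (Fin n) ℂ :=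
  ∑ α ∈ P.support,
    (starRingEnd ℂ) (coeff α P) •
      ((List.finRange n).foldr (fun i g => (qDunkl n q μ i)^[α i] ∘ g) id) Q

/-- The q-Dunkl-Fischer inner product `⟨P, Q⟩ = (conj(P)(D₁^q,…,Dₙ^q) Q)(0)`. -/
noncomputable def qFischerMv (n : ℕ) (q : ℂ) (μ : Fin n → ℝ)
    (P Q : MvPolynomial (Fin n) ℂ) : ℂ :=
  eval (fun _ => (0 : ℂ)) (qFischerApply n q μ P Q)

section Aux

variable (n : ℕ) (q : ℂ) (μ : Fin n → ℝ)

lemma varScale_monomial (c : ℂ) (i : Fin n) (α : Fin n →₀ ℕ) (a : ℂ) :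
    varScale n c i (monomial α a) = c ^ (α i) • monomial α a := by
  rw [varScale, aeval_monomial]
  have key : ∀ (s : Finset (Fin n)) (b : Fin n → ℂ) (f : Fin n → MvPolynomial (Fin n) ℂ),
      ∏ j ∈ s, b j • f j = (∏ j ∈ s, b j) • ∏ j ∈ s, f j := by
    intro s b f
    induction s using Finset.cons_induction_on with
    | empty => simp
    | cons _ _ hj ih =>
      rw [Finset.prod_cons, Finset.prod_cons, Finset.prod_cons, ih, smul_mul_smul_comm]
  have h1 : (α.prod fun j e => (if j = i then c • X j else X j) ^ e)
      = (∏ j ∈ α.support, c ^ (if j = i then α j else 0)) •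
        α.prod fun j e => (X j : MvPolynomial (Fin n) ℂ) ^ e := by
    rw [Finsupp.prod, Finsupp.prod, ← key]
    refine Finset.prod_congr rfl fun j hj => ?_
    by_cases h : j = i
    · subst h; simp [smul_pow]
    · simp [h]
  have h2 : (∏ j ∈ α.support, c ^ (if j = i then α j else 0)) = c ^ (α i) := by
    rw [Finset.prod_pow_eq_pow_sum]
    congr 1
    rw [Finset.sum_ite_eq' α.support i (fun j => α j)]
    by_cases h : i ∈ α.support
    · simp [h]
    · simp [h, Finsupp.notMem_support_iff.mp h]
  rw [h1, h2, mul_smul_comm, monomial_eq, algebraMap_eq]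

lemma divXi_eq_sum (i : Fin n) (f : MvPolynomial (Fin n) ℂ) {S : Finset (Fin n →₀ ℕ)}
    (h : f.support ⊆ S) :
    divXi n i f = ∑ α ∈ S, monomial (α - Finsupp.single i 1) (coeff α f) := by
  unfold divXi
  exact Finset.sum_subset h fun β _ hβ => by
    rw [MvPolynomial.notMem_support_iff.mp hβ, map_zero]

lemma divXi_monomial (i : Fin n) (α : Fin n →₀ ℕ) (a : ℂ) :
    divXi n i (monomial α a) = monomial (α - Finsupp.single i 1) a := by
  rw [divXi_eq_sum n i (monomial α a) (S := {α}) support_monomial_subset,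
    Finset.sum_singleton, coeff_monomial, if_pos rfl]

lemma divXi_add (i : Fin n) (f g : MvPolynomial (Fin n) ℂ) :
    divXi n i (f + g) = divXi n i f + divXi n i g := by
  rw [divXi_eq_sum n i (f + g) (MvPolynomial.support_add),
    divXi_eq_sum n i f Finset.subset_union_left,
    divXi_eq_sum n i g Finset.subset_union_right, ← Finset.sum_add_distrib]
  exact Finset.sum_congr rfl fun β _ => by rw [coeff_add, map_add]

lemma divXi_smul (i : Fin n) (c : ℂ) (f : MvPolynomial (Fin n) ℂ) :
    divXi n i (c • f) = c • divXi n i f := by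
  rw [divXi_eq_sum n i (c • f) (MvPolynomial.support_smul), divXi, Finset.smul_sum]
  exact Finset.sum_congr rfl fun β _ => by rw [coeff_smul, smul_monomial]

lemma qDunkl_add (i : Fin n) (f g : MvPolynomial (Fin n) ℂ) :
    qDunkl n q μ i (f + g) = qDunkl n q μ i f + qDunkl n q μ i g := by
  simp only [qDunkl, map_add, add_sub_add_comm, divXi_add, smul_add]

lemma qDunkl_smul (i : Fin n) (c : ℂ) (f : MvPolynomial (Fin n) ℂ) :
    qDunkl n q μ i (c • f) = c • qDunkl n q μ i f := by
  simp only [qDunkl, map_smul, ← smul_sub, divXi_smul]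
  rw [smul_comm _ c, smul_comm _ c, ← smul_sub]

noncomputable def dS (m : ℝ) (k : ℕ) : ℂ :=
  (q ^ ((m : ℝ) : ℂ) / (q - q⁻¹)) * (q ^ k - (-1 : ℂ) ^ k)
    - (q ^ ((-m : ℝ) : ℂ) / (q - q⁻¹)) * ((q⁻¹) ^ k - (-1 : ℂ) ^ k)

lemma qDunkl_monomial (i : Fin n) (α : Fin n →₀ ℕ) (a : ℂ) :
    qDunkl n q μ i (monomial α a) =
      dS q (μ i) (α i) • monomial (α - Finsupp.single i 1) a := by
  rw [qDunkl, varScale_monomial, varScale_monomial, varScale_monomial, ← sub_smul, ← sub_smul,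
    divXi_smul, divXi_smul, divXi_monomial, smul_smul, smul_smul, ← sub_smul, dS]

lemma qDunkl_qDunkl (i j : Fin n) (f : MvPolynomial (Fin n) ℂ) :
    qDunkl n q μ i (qDunkl n q μ j f) = qDunkl n q μ j (qDunkl n q μ i f) := by
  rcases eq_or_ne i j with rfl | hij
  · rfl
  induction f using MvPolynomial.induction_on' with
  | monomial α a =>
    rw [qDunkl_monomial, qDunkl_smul, qDunkl_monomial, qDunkl_monomial, qDunkl_smul,
      qDunkl_monomial]
    have h1 : (α - Finsupp.single j 1 : Fin n →₀ ℕ) i = α i := by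
      rw [Finsupp.tsub_apply, Finsupp.single_apply, if_neg (fun h => hij h.symm), Nat.sub_zero]
    have h2 : (α - Finsupp.single i 1 : Fin n →₀ ℕ) j = α j := by
      rw [Finsupp.tsub_apply, Finsupp.single_apply, if_neg (fun h => hij.symm h.symm),
        Nat.sub_zero]
    have h3 : (α - Finsupp.single j 1 - Finsupp.single i 1 : Fin n →₀ ℕ)
        = α - Finsupp.single i 1 - Finsupp.single j 1 := by
      rw [tsub_tsub, tsub_tsub, add_comm]
    rw [h1, h2, h3, smul_comm]
  | add f g hf hg => rw [qDunkl_add, qDunkl_add, hf, hg, qDunkl_add, qDunkl_add]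

lemma qDunkl_foldr (i : Fin n) (L : List (Fin n)) (α : Fin n →₀ ℕ)
    (f : MvPolynomial (Fin n) ℂ) :
    qDunkl n q μ i ((L.foldr (fun j g => (qDunkl n q μ j)^[α j] ∘ g) id) f)
      = (L.foldr (fun j g => (qDunkl n q μ j)^[α j] ∘ g) id) (qDunkl n q μ i f) := by
  induction L with
  | nil => rfl
  | cons j L ih =>
    simp only [List.foldr_cons, Function.comp_apply]
    rw [(Function.Commute.iterate_right (fun x => qDunkl_qDunkl n q μ i j x) (α j)) _, ih]

lemma foldr_congr (L : List (Fin n)) (α β : Fin n →₀ ℕ) (h : ∀ j ∈ L, α j = β j)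
    (f : MvPolynomial (Fin n) ℂ) :
    L.foldr (fun j g => (qDunkl n q μ j)^[α j] ∘ g) id f
      = L.foldr (fun j g => (qDunkl n q μ j)^[β j] ∘ g) id f := by
  induction L with
  | nil => rfl
  | cons j L ih =>
    simp only [List.foldr_cons, Function.comp_apply]
    rw [h j (by simp), ih (fun k hk => h k (by simp [hk]))]

lemma foldr_add_single (L : List (Fin n)) (hL : L.Nodup) (i : Fin n) (hi : i ∈ L)
    (α : Fin n →₀ ℕ) (f : MvPolynomial (Fin n) ℂ) :
    L.foldr (fun j g => (qDunkl n q μ j)^[(α + Finsupp.single i 1 : Fin n →₀ ℕ) j] ∘ g) id f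
      = L.foldr (fun j g => (qDunkl n q μ j)^[α j] ∘ g) id (qDunkl n q μ i f) := by
  induction L with
  | nil => cases hi
  | cons j L ih =>
    simp only [List.foldr_cons, Function.comp_apply]
    rcases eq_or_ne j i with rfl | hji
    · have hjL : j ∉ L := (List.nodup_cons.mp hL).1
      have e1 : (α + Finsupp.single j 1 : Fin n →₀ ℕ) j = α j + 1 := by simp
      rw [e1, foldr_congr n q μ L _ α (fun k hk => by
          rw [Finsupp.add_apply, Finsupp.single_apply, if_neg (fun h => hjL (by rw [h]; exact hk)), add_zero]),
        Function.iterate_succ_apply, qDunkl_foldr]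
    · have e1 : (α + Finsupp.single i 1 : Fin n →₀ ℕ) j = α j := by
        rw [Finsupp.add_apply, Finsupp.single_apply, if_neg (fun h => hji h.symm), add_zero]
      have hi' : i ∈ L := by
        rcases List.mem_cons.mp hi with h | h
        · exact absurd h.symm hji
        · exact h
      rw [e1, ih (List.nodup_cons.mp hL).2 hi']

end Aux

/-- Multiplication by `x_i` and the q-Dunkl operator `D_i^q` are adjoint with respect
to the q-Dunkl-Fischer inner product: `⟨x_i P, Q⟩ = ⟨P, D_i^q Q⟩`. -/
theorem qFischer_adjoint (n : ℕ) (q : ℝ) (hq0 : 0 < q) (hq1 : q ≠ 1)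
    (μ : Fin n → ℝ) (hμ : ∀ i, 0 < μ i) (i : Fin n) (P Q : MvPolynomial (Fin n) ℂ) :
    qFischerMv n (q : ℂ) μ (X i * P) Q = qFischerMv n (q : ℂ) μ P (qDunkl n (q : ℂ) μ i Q) := by
  unfold qFischerMv
  congr 1
  unfold qFischerApply
  rw [support_X_mul, Finset.sum_map]
  refine Finset.sum_congr rfl fun α hα => ?_
  simp only [addLeftEmbedding_apply]
  rw [coeff_X_mul]
  congr 1
  rw [show Finsupp.single i 1 + α = α + Finsupp.single i 1 from add_comm _ _]
  exact foldr_add_single n (q : ℂ) μ (List.finRange n) (List.nodup_finRange n) i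
    (List.mem_finRange i) α Q
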